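/- Let S be a local domain, Q a nonzero prime ideal of S with QS_Q = Q such that S/Q is a valuation ring with quotient field S_Q/Q. If R is a regular local subring of S with S_Q = R_{Q∩R}, and x_0,…,x_n are nonzero elements of S such that the images of x_k/x_i in S/Q (for a fixed i with x_i generating among them) generate a principal fractional ideal generated by the image of x_j/x_i with x_j/x_i ∉ Q, then (x_0/x_i, …, x_n/x_i)S = (x_j/x_i)S. -/
import Mathlib


/-- Let `S` be a local domain with quotient field `F`, `Q` a nonzero prime of `S` with
`QS_Q = Q` such that `S/Q` is a valuation ring (with quotient field `S_Q/Q`), and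
suppose every fractional `S`-ideal contained in `S_Q` is comparable to `Q` (expressed by:
if `y ∈ S_Q \ Q` then `Q ⊆ yS`).  If `x₀, …, xₙ` are nonzero elements of `S` and the
images of the `x_k/x_i` in `S/Q` generate the principal fractional ideal generated by the
image of `x_j/x_i`, where `x_j/x_i ∉ Q`, then `(x₀/x_i, …, xₙ/x_i)S = (x_j/x_i)S`. -/
theorem principal_generation_lifts_from_quotient
    (F : Type) [Field F] (S : Subring F) [IsLocalRing S]
    (hfrac : ∀ y : F, ∃ a b : S, b ≠ 0 ∧ y * (b : F) = (a : F))
    (Q : Ideal S) (hQp : Q.IsPrime) (hQne : Q ≠ ⊥)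
    [ValuationRing (S ⧸ Q)]
    (hQSQ : ∀ y ∈ {y : F | ∃ a s : S, s ∉ Q ∧ y * (s : F) = (a : F)},
      ∀ q ∈ {z : F | ∃ q' : S, q' ∈ Q ∧ (q' : F) = z},
        y * q ∈ {z : F | ∃ q' : S, q' ∈ Q ∧ (q' : F) = z})
    (hcomp : ∀ y ∈ {y : F | ∃ a s : S, s ∉ Q ∧ y * (s : F) = (a : F)},
      y ∉ {z : F | ∃ q' : S, q' ∈ Q ∧ (q' : F) = z} →
        {z : F | ∃ q' : S, q' ∈ Q ∧ (q' : F) = z} ⊆ {z : F | ∃ s : S, z = y * (s : F)})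
    (n : ℕ) (x : Fin (n + 1) → F) (hx0 : ∀ k, x k ≠ 0) (hxS : ∀ k, x k ∈ S)
    (i j : Fin (n + 1))
    (hmem : ∀ k, x k / x i ∈ {y : F | ∃ a s : S, s ∉ Q ∧ y * (s : F) = (a : F)})
    (hj : x j / x i ∉ {z : F | ∃ q' : S, q' ∈ Q ∧ (q' : F) = z})
    (hgen : ∀ k, ∃ s : S, ∃ q ∈ {z : F | ∃ q' : S, q' ∈ Q ∧ (q' : F) = z},
      x k / x i = (s : F) * (x j / x i) + q) :
    {y : F | ∃ c : Fin (n + 1) → S, y = ∑ k, (c k : F) * (x k / x i)} =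
      {y : F | ∃ s : S, y = (x j / x i) * (s : F)} := by
  have hsub := hcomp (x j / x i) (hmem j) hj
  -- each x k / x i = (x j / x i) * d k for some d k in S
  have key : ∀ k, ∃ d : S, x k / x i = (x j / x i) * (d : F) := by
    intro k
    obtain ⟨s, q, hq, heq⟩ := hgen k
    obtain ⟨t, ht⟩ := hsub hq
    exact ⟨s + t, by push_cast; rw [heq, ht]; ring⟩
  choose d hd using key
  ext y
  constructor
  · rintro ⟨c, rfl⟩
    refine ⟨∑ k, c k * d k, ?_⟩
    push_cast
    rw [Finset.mul_sum]
    refine Finset.sum_congr rfl fun k _ => ?_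
    rw [hd k]; ring
  · rintro ⟨s, rfl⟩
    refine ⟨fun k => if k = j then s else 0, ?_⟩
    rw [Finset.sum_eq_single j]
    · simp [mul_comm]
    · intro b _ hb; simp [hb]
    · simp
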